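/- (Global error bound.) Let F : ℝ → ℝ be continuously differentiable with L-Lipschitz derivative F′. Then the dual quantization scheme satisfies |E F(X^n) − E F(X̂^n)| ≤ L · Σ_{k=1}^n E|(X̂^{k−1} + α_k Z_k) − X̂^k|², where X^n = Σ_{i=1}^n α_i Z_i and X̂^k = J_{Γ_k}(X̂^{k−1} + α_k Z_k, Λ_k). -/

import Mathlib

open MeasureTheory ProbabilityTheory

/-- Index `j*(ξ)` of the segment `[x_j, x_{j+1})` of the grid containing `ξ`
(with default value `N`, corresponding to the closed last segment). -/
noncomputable def jstar (N : ℕ) (x : ℕ → ℝ) (ξ : ℝ) : ℕ :=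
  if h : ∃ j, j ≤ N ∧ x j ≤ ξ ∧ ξ < x (j + 1) then h.choose else N

/-- The dual quantization operator `J_Γ(ξ, λ)` associated with the grid
`x 0 ≤ x 1 ≤ … ≤ x (N+1)`. -/
noncomputable def dualQ (N : ℕ) (x : ℕ → ℝ) (ξ lam : ℝ) : ℝ :=
  if x (jstar N x ξ + 1) = x (jstar N x ξ) then ξ
  else if lam < (x (jstar N x ξ + 1) - ξ) / (x (jstar N x ξ + 1) - x (jstar N x ξ)) then
    x (jstar N x ξ)
  else x (jstar N x ξ + 1)

/-- The dual quantization scheme `X̂⁰ := 0`, `X̂ᵏ⁺¹ := J_{Γₖ}(X̂ᵏ + αₖ Zₖ, Λₖ)`,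
where the grid `Γₖ` (used in the step producing `X̂ᵏ⁺¹`) has `Nk k` interior points
given by `x k 1, …, x k (Nk k)`. -/
noncomputable def XhatScheme {Ω : Type*} (Nk : ℕ → ℕ) (x : ℕ → ℕ → ℝ) (α : ℕ → ℝ)
    (Z Λ : ℕ → Ω → ℝ) : ℕ → Ω → ℝ
  | 0 => fun _ => 0
  | k + 1 => fun ω =>
      dualQ (Nk k) (x k) (XhatScheme Nk x α Z Λ k ω + α k * Z k ω) (Λ k ω)

lemma grid_mono {N : ℕ} {x : ℕ → ℝ} (hm : ∀ j ≤ N, x j ≤ x (j + 1)) :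
    ∀ j ≤ N + 1, ∀ i ≤ j, x i ≤ x j := by
  intro j
  induction j with
  | zero => intro _ i hi; interval_cases i; exact le_refl _
  | succ j ih =>
    intro hj i hi
    rcases Nat.lt_succ_iff_lt_or_eq.mp (Nat.lt_succ_of_le hi) with h | h
    · exact (ih (by omega) i (by omega)).trans (hm j (by omega))
    · subst h; exact le_refl _

lemma seg_unique {N : ℕ} {x : ℕ → ℝ} {ξ : ℝ} (hm : ∀ j ≤ N, x j ≤ x (j + 1)) {i j : ℕ}
    (hi : i ≤ N ∧ x i ≤ ξ ∧ ξ < x (i + 1)) (hj : j ≤ N ∧ x j ≤ ξ ∧ ξ < x (j + 1)) : i = j := by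
  by_contra hne
  rcases Nat.lt_or_ge i j with h | h
  · have := grid_mono hm j (by omega) (i + 1) (by omega)
    have := hj.2.1
    have := hi.2.2
    linarith
  · have hij : j < i := by omega
    have := grid_mono hm i (by omega) (j + 1) (by omega)
    have := hi.2.1
    have := hj.2.2
    linarith

lemma jstar_eq {N : ℕ} {x : ℕ → ℝ} {ξ : ℝ} (hm : ∀ j ≤ N, x j ≤ x (j + 1)) {j : ℕ}
    (hj : j ≤ N) (h1 : x j ≤ ξ) (h2 : ξ < x (j + 1)) : jstar N x ξ = j := by
  have h : ∃ j, j ≤ N ∧ x j ≤ ξ ∧ ξ < x (j + 1) := ⟨j, hj, h1, h2⟩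
  rw [jstar, dif_pos h]
  exact seg_unique hm h.choose_spec ⟨hj, h1, h2⟩

lemma jstar_le (N : ℕ) (x : ℕ → ℝ) (ξ : ℝ) : jstar N x ξ ≤ N := by
  rw [jstar]
  split
  · next h => exact h.choose_spec.1
  · exact le_refl N

lemma exists_seg {N : ℕ} {x : ℕ → ℝ} {ξ : ℝ} (hm : ∀ j ≤ N, x j ≤ x (j + 1))
    (h0 : x 0 ≤ ξ) (hN : ξ < x (N + 1)) : ∃ j, j ≤ N ∧ x j ≤ ξ ∧ ξ < x (j + 1) := by
  classical
  set j := Nat.findGreatest (fun j => x j ≤ ξ) N with hjdef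
  have hj : x j ≤ ξ := Nat.findGreatest_spec (P := fun j => x j ≤ ξ) (Nat.zero_le N) h0
  refine ⟨j, Nat.findGreatest_le N, hj, ?_⟩
  rcases Nat.lt_or_ge j N with h | h
  · by_contra hlt
    push_neg at hlt
    exact Nat.findGreatest_is_greatest (Nat.lt_succ_of_le (le_refl j)) (by omega) hlt
  · have : j = N := le_antisymm (Nat.findGreatest_le N) h
    rw [this]; exact hN

lemma not_exists_seg {N : ℕ} {x : ℕ → ℝ} {ξ : ℝ} (hm : ∀ j ≤ N, x j ≤ x (j + 1))
    (hN : x (N + 1) ≤ ξ) : ¬ ∃ j, j ≤ N ∧ x j ≤ ξ ∧ ξ < x (j + 1) := by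
  rintro ⟨j, hj, _, h2⟩
  have := grid_mono hm (N + 1) le_rfl (j + 1) (by omega)
  linarith

lemma dualQ_mem {N : ℕ} {x : ℕ → ℝ} (hm : ∀ j ≤ N, x j ≤ x (j + 1)) {ξ : ℝ}
    (h0 : x 0 ≤ ξ) (hN : ξ ≤ x (N + 1)) (lam : ℝ) :
    dualQ N x ξ lam ∈ Set.Icc (x 0) (x (N + 1)) := by
  have hle := jstar_le N x ξ
  have hlow : x 0 ≤ x (jstar N x ξ) := grid_mono hm _ (by omega) 0 (Nat.zero_le _)
  have hhigh : x (jstar N x ξ + 1) ≤ x (N + 1) := grid_mono hm (N + 1) le_rfl _ (by omega)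
  have hlow' : x 0 ≤ x (jstar N x ξ + 1) := grid_mono hm _ (by omega) 0 (Nat.zero_le _)
  have hhigh' : x (jstar N x ξ) ≤ x (N + 1) :=
    le_trans (hm _ hle) hhigh
  rw [dualQ]
  split_ifs
  · exact ⟨h0, hN⟩
  · exact ⟨hlow, hhigh'⟩
  · exact ⟨hlow', hhigh⟩

lemma dualQ_integral {N : ℕ} {x : ℕ → ℝ} (hm : ∀ j ≤ N, x j ≤ x (j + 1)) {ξ : ℝ}
    (h0 : x 0 ≤ ξ) (hN : ξ ≤ x (N + 1)) :
    ∫ lam in Set.Icc (0 : ℝ) 1, dualQ N x ξ lam = ξ := by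
  by_cases hlt : ξ < x (N + 1)
  · obtain ⟨j, hj, h1, h2⟩ := exists_seg hm h0 hlt
    have hjs : jstar N x ξ = j := jstar_eq hm hj h1 h2
    set a := x j with ha
    set b := x (j + 1) with hb
    have hab : a < b := lt_of_le_of_lt h1 h2
    have hne : b ≠ a := ne_of_gt hab
    set θ := (b - ξ) / (b - a) with hθ
    have hθpos : 0 < θ := div_pos (by linarith) (by linarith)
    have hθle : θ ≤ 1 := by
      rw [div_le_one (by linarith)]; linarith
    have hfun : ∀ lam : ℝ, dualQ N x ξ lam =
        b + Set.indicator (Set.Iio θ) (fun _ => a - b) lam := by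
      intro lam
      rw [dualQ, hjs, ← ha, ← hb, if_neg hne]
      by_cases hl : lam < θ
      · rw [if_pos hl]; simp only [Set.indicator, Set.mem_Iio, if_pos hl]; ring
      · rw [if_neg hl]; simp only [Set.indicator, Set.mem_Iio, if_neg hl]; ring
    have hint : ∫ lam in Set.Icc (0 : ℝ) 1, dualQ N x ξ lam =
        ∫ lam in Set.Icc (0 : ℝ) 1,
          (b + Set.indicator (Set.Iio θ) (fun _ => a - b) lam) := by
      exact integral_congr_ae (Filter.Eventually.of_forall fun lam => hfun lam)
    rw [hint, integral_add (integrable_const b)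
      ((integrable_const (a - b)).indicator measurableSet_Iio)]
    rw [setIntegral_const, MeasureTheory.setIntegral_indicator measurableSet_Iio,
      setIntegral_const]
    have hIcc : Set.Icc (0 : ℝ) 1 ∩ Set.Iio θ = Set.Ico 0 θ := by
      ext t
      simp only [Set.mem_inter_iff, Set.mem_Icc, Set.mem_Iio, Set.mem_Ico]
      constructor
      · rintro ⟨⟨h1, h2⟩, h3⟩; exact ⟨h1, h3⟩
      · rintro ⟨h1, h3⟩; exact ⟨⟨h1, le_trans (le_of_lt h3) hθle⟩, h3⟩
    rw [hIcc, measureReal_def, measureReal_def, Real.volume_Icc, Real.volume_Ico]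
    simp only [sub_zero, ENNReal.toReal_ofReal (le_of_lt hθpos), ENNReal.toReal_ofReal
      (zero_le_one' ℝ), smul_eq_mul, one_mul]
    have hba : b - a ≠ 0 := sub_ne_zero.mpr hne
    rw [hθ]
    field_simp
    ring
  · have hξ : ξ = x (N + 1) := le_antisymm hN (not_lt.mp hlt)
    have hne : ¬ ∃ j, j ≤ N ∧ x j ≤ ξ ∧ ξ < x (j + 1) :=
      not_exists_seg hm (le_of_eq hξ.symm)
    have hjs : jstar N x ξ = N := by rw [jstar, dif_neg hne]
    have hfun : ∀ lam ∈ Set.Icc (0 : ℝ) 1, dualQ N x ξ lam = ξ := by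
      intro lam hlam
      rw [dualQ, hjs]
      split_ifs with h1 h2
      · rfl
      · exfalso
        rw [← hξ, sub_self, zero_div] at h2
        exact absurd (lt_of_le_of_lt hlam.1 h2) (lt_irrefl 0)
      · exact hξ.symm
    rw [setIntegral_congr_fun measurableSet_Icc hfun, setIntegral_const, measureReal_def, Real.volume_Icc]
    simp

lemma measurable_nat_cases {α γ : Type*} [MeasurableSpace α] [MeasurableSpace γ]
    {φ : α → ℕ} (hφ : Measurable φ) {D : ℕ → α → γ} (hD : ∀ n, Measurable (D n)) :
    Measurable fun a => D (φ a) a := by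
  intro s hs
  have : (fun a => D (φ a) a) ⁻¹' s = ⋃ n, (φ ⁻¹' {n}) ∩ (D n ⁻¹' s) := by
    ext a
    simp only [Set.mem_preimage, Set.mem_iUnion, Set.mem_inter_iff, Set.mem_singleton_iff]
    constructor
    · intro h; exact ⟨φ a, rfl, h⟩
    · rintro ⟨n, rfl, h⟩; exact h
  rw [this]
  exact MeasurableSet.iUnion fun n => (hφ (measurableSet_singleton n)).inter (hD n hs)

lemma jstar_measurable {N : ℕ} {x : ℕ → ℝ} (hm : ∀ j ≤ N, x j ≤ x (j + 1)) :
    Measurable (jstar N x) := by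
  apply measurable_to_countable'
  intro j
  have : jstar N x ⁻¹' {j} =
      (if j ≤ N then Set.Ico (x j) (x (j + 1)) else ∅) ∪
      (if j = N then (Set.Ico (x 0) (x (N + 1)))ᶜ else ∅) := by
    ext ξ
    simp only [Set.mem_preimage, Set.mem_singleton_iff, Set.mem_union]
    constructor
    · intro h
      by_cases hE : ∃ j', j' ≤ N ∧ x j' ≤ ξ ∧ ξ < x (j' + 1)
      · left
        have hj : jstar N x ξ = hE.choose := by rw [jstar, dif_pos hE]
        obtain ⟨hc1, hc2, hc3⟩ := hE.choose_spec
        rw [h] at hj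
        rw [if_pos (by omega : j ≤ N)]
        rw [← hj] at hc2 hc3
        exact ⟨hc2, hc3⟩
      · right
        have hj : jstar N x ξ = N := by rw [jstar, dif_neg hE]
        rw [if_pos (by omega : j = N)]
        intro hmem
        rcases hmem with ⟨hh0, hhN⟩
        exact hE (exists_seg hm hh0 hhN)
    · intro h
      rcases h with h | h
      · by_cases hj : j ≤ N
        · rw [if_pos hj] at h
          exact jstar_eq hm hj h.1 h.2
        · rw [if_neg hj] at h; exact absurd h (Set.notMem_empty ξ)
      · by_cases hj : j = N
        · rw [if_pos hj] at h
          rw [hj]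
          simp only [Set.mem_compl_iff, Set.mem_Ico, not_and_or, not_le, not_lt] at h
          rcases h with h' | h'
          · have : ¬ ∃ j', j' ≤ N ∧ x j' ≤ ξ ∧ ξ < x (j' + 1) := by
              rintro ⟨j', hj', hx1, _⟩
              have := grid_mono hm j' (by omega) 0 (Nat.zero_le _)
              linarith
            rw [jstar, dif_neg this]
          · rw [jstar, dif_neg (not_exists_seg hm h')]
        · rw [if_neg hj] at h; exact absurd h (Set.notMem_empty ξ)
  rw [this]
  refine MeasurableSet.union ?_ ?_ <;> split_ifs <;>
    first
      | exact measurableSet_Ico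
      | exact MeasurableSet.empty
      | exact measurableSet_Ico.compl

lemma dualQ_measurable {N : ℕ} {x : ℕ → ℝ} (hm : ∀ j ≤ N, x j ≤ x (j + 1)) :
    Measurable (fun p : ℝ × ℝ => dualQ N x p.1 p.2) := by
  have : (fun p : ℝ × ℝ => dualQ N x p.1 p.2) = fun p : ℝ × ℝ =>
      (fun j (q : ℝ × ℝ) => if x (j + 1) = x j then q.1
        else if q.2 < (x (j + 1) - q.1) / (x (j + 1) - x j) then x j else x (j + 1))
      (jstar N x p.1) p := rfl
  rw [this]
  refine measurable_nat_cases (φ := fun p : ℝ × ℝ => jstar N x p.1)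
    (D := fun j (q : ℝ × ℝ) => if x (j + 1) = x j then q.1
        else if q.2 < (x (j + 1) - q.1) / (x (j + 1) - x j) then x j else x (j + 1)) ?_ ?_
  · exact (jstar_measurable hm).comp measurable_fst
  intro j
  by_cases hc : x (j + 1) = x j
  · simp only [if_pos hc]; exact measurable_fst
  · simp only [if_neg hc]
    refine Measurable.ite ?_ measurable_const measurable_const
    exact measurableSet_lt measurable_snd ((measurable_const.sub measurable_fst).div_const _)

lemma taylor_bound {F : ℝ → ℝ} {L : NNReal} (hF : ContDiff ℝ 1 F)
    (hFlip : LipschitzWith L (deriv F)) (y z : ℝ) :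
    |F z - F y - deriv F y * (z - y)| ≤ (L : ℝ) * |z - y| ^ 2 := by
  have hFd : Differentiable ℝ F := hF.differentiable one_ne_zero
  set g : ℝ → ℝ := fun t => F t - deriv F y * t with hg
  have hgd : ∀ t : ℝ, HasDerivAt g (deriv F t - deriv F y) t := by
    intro t
    have h1 : HasDerivAt F (deriv F t) t := (hFd t).hasDerivAt
    have h2 : HasDerivAt (fun s : ℝ => deriv F y * s) (deriv F y * 1) t :=
      (hasDerivAt_id t).const_mul (deriv F y)
    have h3 := h1.sub h2
    rw [mul_one] at h3
    exact h3
  have key : ‖g z - g y‖ ≤ ((L : ℝ) * |z - y|) * ‖z - y‖ := by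
    refine Convex.norm_image_sub_le_of_norm_hasDerivWithin_le
      (f' := fun t => deriv F t - deriv F y)
      (fun t _ => (hgd t).hasDerivWithinAt) ?_ (convex_uIcc y z)
      (Set.left_mem_uIcc) (Set.right_mem_uIcc)
    intro t ht
    have h1 : |deriv F t - deriv F y| ≤ (L : ℝ) * |t - y| := by
      simpa [Real.dist_eq] using hFlip.dist_le_mul t y
    have h2 : |t - y| ≤ |z - y| := by
      rcases le_total y z with hyz | hyz
      · rw [Set.uIcc_of_le hyz, Set.mem_Icc] at ht
        rw [abs_of_nonneg (by linarith : (0:ℝ) ≤ t - y),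
          abs_of_nonneg (by linarith : (0:ℝ) ≤ z - y)]
        linarith
      · rw [Set.uIcc_of_ge hyz, Set.mem_Icc] at ht
        rw [abs_of_nonpos (by linarith : t - y ≤ 0),
          abs_of_nonpos (by linarith : z - y ≤ 0)]
        linarith
    calc ‖deriv F t - deriv F y‖ = |deriv F t - deriv F y| := rfl
      _ ≤ (L : ℝ) * |t - y| := h1
      _ ≤ (L : ℝ) * |z - y| := by
          exact mul_le_mul_of_nonneg_left h2 L.coe_nonneg
  have heq : F z - F y - deriv F y * (z - y) = g z - g y := by
    simp only [hg]; ring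
  rw [heq]
  calc |g z - g y| ≤ ((L : ℝ) * |z - y|) * |z - y| := key
    _ = (L : ℝ) * |z - y| ^ 2 := by ring

lemma integrable_of_bounded_meas {Ω : Type*} [MeasurableSpace Ω] {P : Measure Ω}
    [IsFiniteMeasure P] {f : Ω → ℝ} (hf : Measurable f) (C : ℝ) (h : ∀ ω, |f ω| ≤ C) :
    Integrable f P :=
  ⟨hf.aestronglyMeasurable, HasFiniteIntegral.of_bounded
    (C := C) (Filter.Eventually.of_forall fun ω => by simpa [Real.norm_eq_abs] using h ω)⟩

noncomputable def psiFun (Nk : ℕ → ℕ) (x : ℕ → ℕ → ℝ) (α : ℕ → ℝ) : ℕ → ((ℕ ⊕ ℕ) → ℝ) → ℝ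
  | 0 => fun _ => 0
  | k + 1 => fun u =>
      dualQ (Nk k) (x k) (psiFun Nk x α k u + α k * u (Sum.inl k)) (u (Sum.inr k))

lemma psiFun_congr (Nk : ℕ → ℕ) (x : ℕ → ℕ → ℝ) (α : ℕ → ℝ) :
    ∀ (k : ℕ) (u v : (ℕ ⊕ ℕ) → ℝ), (∀ i < k, u (Sum.inl i) = v (Sum.inl i)) →
      (∀ i < k, u (Sum.inr i) = v (Sum.inr i)) → psiFun Nk x α k u = psiFun Nk x α k v := by
  intro k
  induction k with
  | zero => intros; rfl
  | succ k ih =>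
    intro u v h1 h2
    simp only [psiFun]
    rw [ih u v (fun i hi => h1 i (by omega)) (fun i hi => h2 i (by omega)),
      h1 k (by omega), h2 k (by omega)]

lemma psiFun_measurable {n : ℕ} (Nk : ℕ → ℕ) (x : ℕ → ℕ → ℝ) (α : ℕ → ℝ)
    (hmono : ∀ k < n, ∀ j ≤ Nk k, x k j ≤ x k (j + 1)) :
    ∀ k ≤ n, Measurable (psiFun Nk x α k) := by
  intro k
  induction k with
  | zero => intro _; exact measurable_const
  | succ k ih =>
    intro hk
    have hk' : k < n := by omega
    have hmeas := dualQ_measurable (hmono k hk')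
    have h1 : Measurable fun u : (ℕ ⊕ ℕ) → ℝ =>
        (psiFun Nk x α k u + α k * u (Sum.inl k), u (Sum.inr k)) :=
      ((ih (by omega)).add ((measurable_pi_apply (Sum.inl k)).const_mul (α k))).prodMk
        (measurable_pi_apply (Sum.inr k))
    exact hmeas.comp h1

lemma Xhat_eq_psi {Ω : Type*} (Nk : ℕ → ℕ) (x : ℕ → ℕ → ℝ) (α : ℕ → ℝ)
    (Z Λ : ℕ → Ω → ℝ) (k : ℕ) (ω : Ω) :
    XhatScheme Nk x α Z Λ k ω = psiFun Nk x α k (fun j => Sum.elim Z Λ j ω) := by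
  induction k with
  | zero => rfl
  | succ k ih => simp only [XhatScheme, psiFun, ih]; rfl

lemma Xhat_measurable {Ω : Type*} [MeasurableSpace Ω] {n : ℕ} (Nk : ℕ → ℕ) (x : ℕ → ℕ → ℝ)
    (α : ℕ → ℝ) (Z Λ : ℕ → Ω → ℝ) (hZmeas : ∀ i, Measurable (Z i))
    (hΛmeas : ∀ i, Measurable (Λ i))
    (hmono : ∀ k < n, ∀ j ≤ Nk k, x k j ≤ x k (j + 1)) :
    ∀ k ≤ n, Measurable (XhatScheme Nk x α Z Λ k) := by
  intro k
  induction k with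
  | zero => intro _; exact measurable_const
  | succ k ih =>
    intro hk
    have hk' : k < n := by omega
    have hmeas := dualQ_measurable (hmono k hk')
    exact hmeas.comp (((ih (by omega)).add ((hZmeas k).const_mul (α k))).prodMk (hΛmeas k))

lemma Xhat_bounds {Ω : Type*} {n : ℕ} (Nk : ℕ → ℕ) (x : ℕ → ℕ → ℝ) (α : ℕ → ℝ)
    (Z Λ : ℕ → Ω → ℝ)
    (hα : ∀ i < n, 0 < α i) (hZ01 : ∀ i < n, ∀ ω, Z i ω = 0 ∨ Z i ω = 1)
    (hmono : ∀ k < n, ∀ j ≤ Nk k, x k j ≤ x k (j + 1))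
    (hx0 : ∀ k < n, x k 0 = 0)
    (hxN : ∀ k < n, x k (Nk k + 1) = ∑ i ∈ Finset.range (k + 1), α i) :
    ∀ k ≤ n, ∀ ω, XhatScheme Nk x α Z Λ k ω ∈
      Set.Icc (0 : ℝ) (∑ i ∈ Finset.range k, α i) := by
  intro k
  induction k with
  | zero => intro _ ω; simp [XhatScheme]
  | succ k ih =>
    intro hk ω
    have hk' : k < n := by omega
    obtain ⟨hl, hr⟩ := ih (by omega) ω
    have hZ : 0 ≤ Z k ω ∧ Z k ω ≤ 1 := by
      rcases hZ01 k hk' ω with h | h <;> rw [h] <;> norm_num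
    have hαk := hα k hk'
    have hξl : x k 0 ≤ XhatScheme Nk x α Z Λ k ω + α k * Z k ω := by
      rw [hx0 k hk']
      nlinarith [hZ.1, hZ.2]
    have hξr : XhatScheme Nk x α Z Λ k ω + α k * Z k ω ≤ x k (Nk k + 1) := by
      rw [hxN k hk', Finset.sum_range_succ]
      nlinarith [hZ.1, hZ.2]
    have := dualQ_mem (hmono k hk') hξl hξr (Λ k ω)
    rw [hx0 k hk', hxN k hk'] at this
    exact this

lemma key_zero {Ω : Type*} [MeasurableSpace Ω] (P : Measure Ω) [IsProbabilityMeasure P]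
    (n : ℕ) (α : ℕ → ℝ) (hα : ∀ i < n, 0 < α i)
    (Z Λ : ℕ → Ω → ℝ)
    (hZmeas : ∀ i, Measurable (Z i)) (hΛmeas : ∀ i, Measurable (Λ i))
    (hZ01 : ∀ i < n, ∀ ω, Z i ω = 0 ∨ Z i ω = 1)
    (hΛunif : ∀ i < n, Measure.map (Λ i) P = volume.restrict (Set.Icc (0 : ℝ) 1))
    (hindep : iIndepFun (Sum.elim Z Λ) P)
    (Nk : ℕ → ℕ) (x : ℕ → ℕ → ℝ)
    (hmono : ∀ k < n, ∀ j ≤ Nk k, x k j ≤ x k (j + 1))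
    (hx0 : ∀ k < n, x k 0 = 0)
    (hxN : ∀ k < n, x k (Nk k + 1) = ∑ i ∈ Finset.range (k + 1), α i)
    (F : ℝ → ℝ) (L : NNReal) (hF : ContDiff ℝ 1 F) (hFlip : LipschitzWith L (deriv F))
    (k : ℕ) (hk : k < n) :
    ∫ ω, deriv F ((XhatScheme Nk x α Z Λ k ω + α k * Z k ω) +
        ∑ i ∈ Finset.Ico (k + 1) n, α i * Z i ω) *
      (XhatScheme Nk x α Z Λ (k + 1) ω - (XhatScheme Nk x α Z Λ k ω + α k * Z k ω)) ∂P
      = 0 := by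
  classical
  have hm := hmono k hk
  have hsk0 : x k 0 = 0 := hx0 k hk
  set sk : ℝ := x k (Nk k + 1) with hskdef
  have hs_nonneg : (0 : ℝ) ≤ sk := by
    have := grid_mono hm (Nk k + 1) le_rfl 0 (Nat.zero_le _)
    rw [hsk0] at this; exact this
  set A : ℝ := ∑ i ∈ Finset.Ico (k + 1) n, α i with hAdef
  have hA_nonneg : (0 : ℝ) ≤ A :=
    Finset.sum_nonneg fun i hi => le_of_lt (hα i (Finset.mem_Ico.mp hi).2)
  -- the index sets
  set S : Finset (ℕ ⊕ ℕ) :=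
    ((Finset.range n).image Sum.inl) ∪ ((Finset.range k).image Sum.inr) with hSdef
  set T : Finset (ℕ ⊕ ℕ) := {Sum.inr k} with hTdef
  have hdisj : Disjoint S T := by
    rw [Finset.disjoint_right]
    intro a ha
    rw [hTdef, Finset.mem_singleton] at ha
    subst ha
    simp only [hSdef, Finset.mem_union, Finset.mem_image, Finset.mem_range]
    push_neg
    constructor
    · intro i _; exact fun h => Sum.inl_ne_inr h
    · intro i hi h
      have : i = k := Sum.inr.inj h
      omega
  have hbase_meas : ∀ i : ℕ ⊕ ℕ, Measurable (Sum.elim Z Λ i) := by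
    rintro (i | i)
    · exact hZmeas i
    · exact hΛmeas i
  have hIF := hindep.indepFun_finset S T hdisj hbase_meas
  set W : Ω → ({a // a ∈ S} → ℝ) := fun ω i => Sum.elim Z Λ i.1 ω with hWdef
  have hWmeas : Measurable W := measurable_pi_lambda _ fun i => hbase_meas i.1
  have hkT : (Sum.inr k : ℕ ⊕ ℕ) ∈ T := Finset.mem_singleton_self _
  have hIF2 : IndepFun W (Λ k) P := by
    have h := hIF.comp (measurable_id (α := {a // a ∈ S} → ℝ))
      (measurable_pi_apply (⟨Sum.inr k, hkT⟩ : {a // a ∈ T}))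
    exact h
  -- extension of a tuple on S to a full function
  set extS : ({a // a ∈ S} → ℝ) → ((ℕ ⊕ ℕ) → ℝ) :=
    fun v j => if h : j ∈ S then v ⟨j, h⟩ else 0 with hextSdef
  have hextS_meas : Measurable extS := by
    apply measurable_pi_lambda
    intro j
    by_cases h : j ∈ S
    · simp only [hextSdef, dif_pos h]; exact measurable_pi_apply _
    · simp only [hextSdef, dif_neg h]; exact measurable_const
  have hinlS : ∀ i < n, (Sum.inl i : ℕ ⊕ ℕ) ∈ S := fun i hi => by
    rw [hSdef]
    exact Finset.mem_union_left _ (Finset.mem_image_of_mem _ (Finset.mem_range.mpr hi))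
  have hinrS : ∀ i < k, (Sum.inr i : ℕ ⊕ ℕ) ∈ S := fun i hi => by
    rw [hSdef]
    exact Finset.mem_union_right _ (Finset.mem_image_of_mem _ (Finset.mem_range.mpr hi))
  have hextW : ∀ (ω : Ω) (j : ℕ ⊕ ℕ), j ∈ S → extS (W ω) j = Sum.elim Z Λ j ω := by
    intro ω j hj
    simp only [hextSdef, dif_pos hj, hWdef]
  -- the clamped functionals
  set ξf : ({a // a ∈ S} → ℝ) → ℝ :=
    fun v => max 0 (min sk (psiFun Nk x α k (extS v) + α k * extS v (Sum.inl k))) with hξfdef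
  set Rf : ({a // a ∈ S} → ℝ) → ℝ :=
    fun v => ∑ i ∈ Finset.Ico (k + 1) n, α i * max 0 (min 1 (extS v (Sum.inl i))) with hRfdef
  have hψmeas : Measurable (psiFun Nk x α k) :=
    psiFun_measurable Nk x α hmono k (le_of_lt hk)
  have hξf_meas : Measurable ξf := by
    apply Measurable.max measurable_const
    apply Measurable.min measurable_const
    exact (hψmeas.comp hextS_meas).add
      (((measurable_pi_apply (Sum.inl k)).comp hextS_meas).const_mul (α k))
  have hRf_meas : Measurable Rf := by
    apply Finset.measurable_sum
    intro i _
    exact (Measurable.max measurable_const (Measurable.min measurable_const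
      ((measurable_pi_apply (Sum.inl i)).comp hextS_meas))).const_mul (α i)
  have hξf_mem : ∀ v, ξf v ∈ Set.Icc (0 : ℝ) sk := fun v =>
    ⟨le_max_left _ _, max_le hs_nonneg (min_le_left _ _)⟩
  have hRf_mem : ∀ v, Rf v ∈ Set.Icc (0 : ℝ) A := by
    intro v
    constructor
    · apply Finset.sum_nonneg
      intro i hi
      exact mul_nonneg (le_of_lt (hα i (Finset.mem_Ico.mp hi).2)) (le_max_left _ _)
    · apply Finset.sum_le_sum
      intro i hi
      have hαi := hα i (Finset.mem_Ico.mp hi).2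
      have h1 : max 0 (min 1 (extS v (Sum.inl i))) ≤ 1 :=
        max_le zero_le_one (min_le_left _ _)
      nlinarith
  -- the function H on the product space
  set H : (({a // a ∈ S} → ℝ) × ℝ) → ℝ := fun q =>
    deriv F (ξf q.1 + Rf q.1) * (dualQ (Nk k) (x k) (ξf q.1) q.2 - ξf q.1) with hHdef
  have hH_meas : Measurable H := by
    apply Measurable.mul
    · exact (hFlip.continuous.measurable).comp
        ((hξf_meas.comp measurable_fst).add (hRf_meas.comp measurable_fst))
    · exact ((dualQ_measurable hm).comp
        ((hξf_meas.comp measurable_fst).prodMk measurable_snd)).sub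
        (hξf_meas.comp measurable_fst)
  have hderiv_bound : ∀ t : ℝ, |t| ≤ sk + A → |deriv F t| ≤ |deriv F 0| + L * (sk + A) := by
    intro t ht
    have h1 : |deriv F t - deriv F 0| ≤ (L : ℝ) * |t| := by
      simpa [Real.dist_eq] using hFlip.dist_le_mul t 0
    have h2 : (L : ℝ) * |t| ≤ (L : ℝ) * (sk + A) :=
      mul_le_mul_of_nonneg_left ht L.coe_nonneg
    calc |deriv F t| = |deriv F 0 + (deriv F t - deriv F 0)| := by ring_nf
      _ ≤ |deriv F 0| + |deriv F t - deriv F 0| := abs_add_le _ _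
      _ ≤ |deriv F 0| + (L : ℝ) * (sk + A) := by linarith
  have hC_bound : ∀ q, |H q| ≤ (|deriv F 0| + L * (sk + A)) * sk := by
    intro q
    rw [hHdef, abs_mul]
    have hξ := hξf_mem q.1
    have hR := hRf_mem q.1
    have hd := dualQ_mem hm (by rw [hsk0]; exact hξ.1) hξ.2 q.2
    rw [hsk0] at hd
    have h1 : |deriv F (ξf q.1 + Rf q.1)| ≤ |deriv F 0| + L * (sk + A) := by
      apply hderiv_bound
      rw [abs_of_nonneg (by linarith [hξ.1, hR.1])]
      linarith [hξ.2, hR.2]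
    have h2 : |dualQ (Nk k) (x k) (ξf q.1) q.2 - ξf q.1| ≤ sk := by
      rw [abs_le]
      constructor <;> [linarith [hd.1, hξ.2]; linarith [hd.2, hξ.1]]
    have h3 : (0 : ℝ) ≤ |deriv F 0| + L * (sk + A) := by positivity
    exact mul_le_mul h1 h2 (abs_nonneg _) h3
  -- pointwise identification
  have key1 : ∀ ω, deriv F ((XhatScheme Nk x α Z Λ k ω + α k * Z k ω) +
        ∑ i ∈ Finset.Ico (k + 1) n, α i * Z i ω) *
      (XhatScheme Nk x α Z Λ (k + 1) ω - (XhatScheme Nk x α Z Λ k ω + α k * Z k ω))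
      = H (W ω, Λ k ω) := by
    intro ω
    have hψ : psiFun Nk x α k (extS (W ω)) = XhatScheme Nk x α Z Λ k ω := by
      rw [Xhat_eq_psi Nk x α Z Λ k ω]
      apply psiFun_congr
      · intro i hi
        exact hextW ω (Sum.inl i) (hinlS i (by omega))
      · intro i hi
        exact hextW ω (Sum.inr i) (hinrS i hi)
    have hZk : extS (W ω) (Sum.inl k) = Z k ω := hextW ω (Sum.inl k) (hinlS k hk)
    have hXb := Xhat_bounds Nk x α Z Λ hα hZ01 hmono hx0 hxN k (le_of_lt hk) ω
    have hZk01 : 0 ≤ Z k ω ∧ Z k ω ≤ 1 := by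
      rcases hZ01 k hk ω with h | h <;> rw [h] <;> norm_num
    have hαk := hα k hk
    have hξrange : 0 ≤ XhatScheme Nk x α Z Λ k ω + α k * Z k ω ∧
        XhatScheme Nk x α Z Λ k ω + α k * Z k ω ≤ sk := by
      constructor
      · nlinarith [hXb.1, hZk01.1, hZk01.2]
      · rw [hskdef, hxN k hk, Finset.sum_range_succ]
        nlinarith [hXb.2, hZk01.1, hZk01.2]
    have hξfW : ξf (W ω) = XhatScheme Nk x α Z Λ k ω + α k * Z k ω := by
      rw [hξfdef]
      simp only
      rw [hψ, hZk, min_eq_right hξrange.2, max_eq_right hξrange.1]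
    have hRfW : Rf (W ω) = ∑ i ∈ Finset.Ico (k + 1) n, α i * Z i ω := by
      rw [hRfdef]
      simp only
      apply Finset.sum_congr rfl
      intro i hi
      rw [hextW ω (Sum.inl i) (hinlS i (Finset.mem_Ico.mp hi).2)]
      rcases hZ01 i (Finset.mem_Ico.mp hi).2 ω with h | h <;> simp [h]
    rw [hHdef]
    simp only
    rw [hξfW, hRfW]
    rfl
  -- rewrite the integral using the pointwise identity
  rw [integral_congr_ae (Filter.Eventually.of_forall key1)]
  -- push to the product measure
  have hpair : Measurable fun ω => (W ω, Λ k ω) := hWmeas.prodMk (hΛmeas k)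
  rw [← integral_map hpair.aemeasurable hH_meas.aestronglyMeasurable]
  rw [(indepFun_iff_map_prod_eq_prod_map_map hWmeas.aemeasurable
    (hΛmeas k).aemeasurable).mp hIF2]
  haveI : IsProbabilityMeasure (P.map W) := Measure.isProbabilityMeasure_map hWmeas.aemeasurable
  haveI hprob1 : IsProbabilityMeasure (volume.restrict (Set.Icc (0 : ℝ) 1)) := by
    constructor
    simp [Real.volume_Icc]
  haveI : IsProbabilityMeasure (P.map (Λ k)) := by
    rw [hΛunif k hk]; exact hprob1
  have hHint : Integrable H ((P.map W).prod (P.map (Λ k))) :=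
    integrable_of_bounded_meas hH_meas _ hC_bound
  rw [MeasureTheory.integral_prod _ hHint]
  have hinner : ∀ v, (∫ lam, H (v, lam) ∂(P.map (Λ k))) = 0 := by
    intro v
    rw [hΛunif k hk]
    have hξ := hξf_mem v
    have hint1 : ∫ lam in Set.Icc (0 : ℝ) 1, dualQ (Nk k) (x k) (ξf v) lam = ξf v :=
      dualQ_integral hm (by rw [hsk0]; exact hξ.1) hξ.2
    have hdmeas : Measurable fun lam => dualQ (Nk k) (x k) (ξf v) lam :=
      (dualQ_measurable hm).comp (measurable_const.prodMk measurable_id)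
    have hdbound : ∀ lam : ℝ, |dualQ (Nk k) (x k) (ξf v) lam| ≤ sk := by
      intro lam
      have hd := dualQ_mem hm (by rw [hsk0]; exact hξ.1) hξ.2 lam
      rw [hsk0] at hd
      rw [abs_le]; exact ⟨by linarith [hd.1], hd.2⟩
    have hdint : Integrable (fun lam => dualQ (Nk k) (x k) (ξf v) lam)
        (volume.restrict (Set.Icc (0 : ℝ) 1)) :=
      integrable_of_bounded_meas hdmeas sk hdbound
    simp only [hHdef]
    rw [integral_const_mul]
    rw [integral_sub hdint (integrable_const _)]
    rw [hint1, setIntegral_const, measureReal_def, Real.volume_Icc]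
    simp
  rw [integral_congr_ae (Filter.Eventually.of_forall hinner)]
  simp

/-- **Global error bound.** Let `F : ℝ → ℝ` be continuously differentiable with
`L`-Lipschitz derivative. Then the dual quantization scheme satisfies
`|E F(Xⁿ) − E F(X̂ⁿ)| ≤ L · Σ_{k=1}^n E|(X̂ᵏ⁻¹ + αₖ Zₖ) − X̂ᵏ|²`,
where `Xⁿ = Σ αᵢ Zᵢ` and `X̂ᵏ = J_{Γₖ}(X̂ᵏ⁻¹ + αₖ Zₖ, Λₖ)`. -/
theorem dualQ_global_error {Ω : Type*} [MeasurableSpace Ω] (P : Measure Ω)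
    [IsProbabilityMeasure P]
    (n : ℕ) (hn : 1 ≤ n) (α p : ℕ → ℝ)
    (hα : ∀ i < n, 0 < α i) (hp : ∀ i < n, p i ∈ Set.Ioo (0 : ℝ) 1)
    (Z Λ : ℕ → Ω → ℝ)
    (hZmeas : ∀ i, Measurable (Z i)) (hΛmeas : ∀ i, Measurable (Λ i))
    -- the Zᵢ are {0,1}-valued Bernoulli(pᵢ) random variables
    (hZ01 : ∀ i < n, ∀ ω, Z i ω = 0 ∨ Z i ω = 1)
    (hZp : ∀ i < n, P {ω | Z i ω = 1} = ENNReal.ofReal (p i))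
    -- the Λᵢ are uniformly distributed on [0,1]
    (hΛunif : ∀ i < n, Measure.map (Λ i) P = volume.restrict (Set.Icc (0 : ℝ) 1))
    -- joint independence of (Z₁,…,Zₙ,Λ₁,…,Λₙ)
    (hindep : iIndepFun (Sum.elim Z Λ) P)
    -- the grids: `x k 0 = 0 ≤ x k 1 ≤ … ≤ x k (Nk k) ≤ x k (Nk k + 1) = Σ_{i ≤ k} αᵢ`
    (Nk : ℕ → ℕ) (x : ℕ → ℕ → ℝ)
    (hmono : ∀ k < n, ∀ j ≤ Nk k, x k j ≤ x k (j + 1))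
    (hx0 : ∀ k < n, x k 0 = 0)
    (hxN : ∀ k < n, x k (Nk k + 1) = ∑ i ∈ Finset.range (k + 1), α i)
    (F : ℝ → ℝ) (L : NNReal) (hF : ContDiff ℝ 1 F) (hFlip : LipschitzWith L (deriv F)) :
    |(∫ ω, F (∑ i ∈ Finset.range n, α i * Z i ω) ∂P) -
        ∫ ω, F (XhatScheme Nk x α Z Λ n ω) ∂P| ≤
      (L : ℝ) * ∑ k ∈ Finset.range n,
        ∫ ω, |(XhatScheme Nk x α Z Λ k ω + α k * Z k ω) -
          XhatScheme Nk x α Z Λ (k + 1) ω| ^ 2 ∂P := by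
  classical
  set Xh : ℕ → Ω → ℝ := XhatScheme Nk x α Z Λ with hXhdef
  set Y : ℕ → Ω → ℝ := fun k ω => Xh k ω + ∑ i ∈ Finset.Ico k n, α i * Z i ω with hYdef
  set A : ℝ := ∑ i ∈ Finset.range n, α i with hAdef
  have hA_nonneg : (0 : ℝ) ≤ A :=
    Finset.sum_nonneg fun i hi => le_of_lt (hα i (Finset.mem_range.mp hi))
  have hXb := Xhat_bounds Nk x α Z Λ hα hZ01 hmono hx0 hxN
  have hXm := Xhat_measurable Nk x α Z Λ hZmeas hΛmeas hmono
  have hZval : ∀ i < n, ∀ ω, 0 ≤ Z i ω ∧ Z i ω ≤ 1 := by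
    intro i hi ω
    rcases hZ01 i hi ω with h | h <;> rw [h] <;> norm_num
  have hsum_range : ∀ k ≤ n, (∑ i ∈ Finset.range k, α i) ≤ A := by
    intro k hk
    rw [hAdef]
    apply Finset.sum_le_sum_of_subset_of_nonneg
    · exact Finset.range_subset_range.mpr hk
    · intro i hi _; exact le_of_lt (hα i (Finset.mem_range.mp hi))
  have hIcoval : ∀ k ≤ n, ∀ ω, 0 ≤ (∑ i ∈ Finset.Ico k n, α i * Z i ω) ∧
      (∑ i ∈ Finset.Ico k n, α i * Z i ω) ≤ ∑ i ∈ Finset.Ico k n, α i := by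
    intro k hk ω
    constructor
    · apply Finset.sum_nonneg
      intro i hi
      have := hZval i (Finset.mem_Ico.mp hi).2 ω
      exact mul_nonneg (le_of_lt (hα i (Finset.mem_Ico.mp hi).2)) this.1
    · apply Finset.sum_le_sum
      intro i hi
      have hz := hZval i (Finset.mem_Ico.mp hi).2 ω
      have := hα i (Finset.mem_Ico.mp hi).2
      nlinarith
  have hsplit : ∀ k ≤ n, (∑ i ∈ Finset.range k, α i) + ∑ i ∈ Finset.Ico k n, α i = A := by
    intro k hk
    rw [hAdef]
    exact Finset.sum_range_add_sum_Ico _ hk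
  have hYb : ∀ k ≤ n, ∀ ω, Y k ω ∈ Set.Icc (0 : ℝ) A := by
    intro k hk ω
    have h1 := hXb k hk ω
    have h2 := hIcoval k hk ω
    have h3 := hsplit k hk
    constructor
    · have := h1.1; have := h2.1; simp only [hYdef]; linarith
    · have := h1.2; have := h2.2; simp only [hYdef]; linarith
  have hYmeas : ∀ k ≤ n, Measurable (Y k) := by
    intro k hk
    exact (hXm k hk).add (Finset.measurable_sum _ fun i _ => (hZmeas i).const_mul (α i))
  -- bound for F on [0, A]
  obtain ⟨CF, hCF⟩ := (isCompact_Icc (a := (0:ℝ)) (b := A)).exists_bound_of_continuousOn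
    (hF.continuous.continuousOn)
  -- bound for deriv F on [0, A]
  have hCD : ∀ t ∈ Set.Icc (0 : ℝ) A, |deriv F t| ≤ |deriv F 0| + L * A := by
    intro t ht
    have h1 : |deriv F t - deriv F 0| ≤ (L : ℝ) * |t| := by
      simpa [Real.dist_eq] using hFlip.dist_le_mul t 0
    have h2 : |t| ≤ A := by rw [abs_of_nonneg ht.1]; exact ht.2
    have h3 : (L : ℝ) * |t| ≤ (L : ℝ) * A := mul_le_mul_of_nonneg_left h2 L.coe_nonneg
    calc |deriv F t| = |deriv F 0 + (deriv F t - deriv F 0)| := by ring_nf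
      _ ≤ |deriv F 0| + |deriv F t - deriv F 0| := abs_add_le _ _
      _ ≤ |deriv F 0| + (L : ℝ) * A := by linarith
  -- bounds on ξ k and Δ k
  have hξmem : ∀ k < n, ∀ ω, Xh k ω + α k * Z k ω ∈ Set.Icc (0 : ℝ) A := by
    intro k hk ω
    have h1 := hXb k (le_of_lt hk) ω
    have hz := hZval k hk ω
    have hαk := hα k hk
    have hsum : (∑ i ∈ Finset.range (k + 1), α i) ≤ A := hsum_range (k + 1) (by omega)
    rw [Finset.sum_range_succ] at hsum
    constructor
    · have := h1.1; nlinarith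
    · have := h1.2; nlinarith
  have hΔb : ∀ k < n, ∀ ω, |(Xh k ω + α k * Z k ω) - Xh (k + 1) ω| ≤ A := by
    intro k hk ω
    have h1 := hξmem k hk ω
    have h2 := hXb (k + 1) (by omega) ω
    have h3 : (∑ i ∈ Finset.range (k + 1), α i) ≤ A := hsum_range (k + 1) (by omega)
    rw [abs_le]
    constructor
    · have := h2.2; have := h1.1; linarith
    · have := h2.1; have := h1.2; linarith
  -- integrability facts
  have hIF : ∀ k ≤ n, Integrable (fun ω => F (Y k ω)) P := by
    intro k hk
    apply integrable_of_bounded_meas (hF.continuous.measurable.comp (hYmeas k hk)) CF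
    intro ω
    simpa [Real.norm_eq_abs] using hCF _ (hYb k hk ω)
  have hΔmeas : ∀ k < n, Measurable fun ω => (Xh k ω + α k * Z k ω) - Xh (k + 1) ω := by
    intro k hk
    exact ((hXm k (le_of_lt hk)).add ((hZmeas k).const_mul (α k))).sub (hXm (k+1) (by omega))
  have hIG : ∀ k < n, Integrable (fun ω =>
      deriv F (Y k ω) * (Xh (k + 1) ω - (Xh k ω + α k * Z k ω))) P := by
    intro k hk
    apply integrable_of_bounded_meas
      ((hFlip.continuous.measurable.comp (hYmeas k (le_of_lt hk))).mul
        (((hXm (k+1) (by omega)).sub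
          ((hXm k (le_of_lt hk)).add ((hZmeas k).const_mul (α k))))))
      ((|deriv F 0| + L * A) * A)
    intro ω
    show |deriv F (Y k ω) * (Xh (k + 1) ω - (Xh k ω + α k * Z k ω))| ≤ _
    rw [abs_mul]
    have h1 := hCD _ (hYb k (le_of_lt hk) ω)
    have h2 : |Xh (k + 1) ω - (Xh k ω + α k * Z k ω)| ≤ A := by
      rw [abs_sub_comm]; exact hΔb k hk ω
    have h3 : (0:ℝ) ≤ |deriv F 0| + L * A := by positivity
    exact mul_le_mul h1 h2 (abs_nonneg _) h3
  have hIsq : ∀ k < n, Integrable (fun ω =>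
      |(Xh k ω + α k * Z k ω) - Xh (k + 1) ω| ^ 2) P := by
    intro k hk
    apply integrable_of_bounded_meas (((hΔmeas k hk).abs.pow measurable_const)) (A ^ 2)
    intro ω
    have := hΔb k hk ω
    have h0 : (0:ℝ) ≤ |(Xh k ω + α k * Z k ω) - Xh (k + 1) ω| := abs_nonneg _
    rw [abs_of_nonneg (by positivity)]
    nlinarith
  -- decomposition of Y
  have hYsucc : ∀ k < n, ∀ ω, Y (k + 1) ω - Y k ω =
      Xh (k + 1) ω - (Xh k ω + α k * Z k ω) := by
    intro k hk ω
    simp only [hYdef]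
    rw [Finset.sum_eq_sum_Ico_succ_bot hk (fun i => α i * Z i ω)]
    ring
  have hYk_eq : ∀ k < n, ∀ ω, Y k ω =
      (Xh k ω + α k * Z k ω) + ∑ i ∈ Finset.Ico (k + 1) n, α i * Z i ω := by
    intro k hk ω
    simp only [hYdef]
    rw [Finset.sum_eq_sum_Ico_succ_bot hk (fun i => α i * Z i ω)]
    ring
  -- per-step bound
  have hstep : ∀ k < n, |(∫ ω, F (Y k ω) ∂P) - ∫ ω, F (Y (k + 1) ω) ∂P| ≤
      (L : ℝ) * ∫ ω, |(Xh k ω + α k * Z k ω) - Xh (k + 1) ω| ^ 2 ∂P := by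
    intro k hk
    have hzero := key_zero P n α hα Z Λ hZmeas hΛmeas hZ01 hΛunif hindep Nk x hmono hx0 hxN
      F L hF hFlip k hk
    -- the zero integral equals ∫ deriv F (Y k) * (Xh (k+1) - ξ k)
    have hzero' : ∫ ω, deriv F (Y k ω) * (Xh (k + 1) ω - (Xh k ω + α k * Z k ω)) ∂P = 0 := by
      have heq : (fun ω => deriv F (Y k ω) * (Xh (k + 1) ω - (Xh k ω + α k * Z k ω)))
          = fun ω => deriv F ((Xh k ω + α k * Z k ω) +
              ∑ i ∈ Finset.Ico (k + 1) n, α i * Z i ω) *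
            (Xh (k + 1) ω - (Xh k ω + α k * Z k ω)) := by
        funext ω
        rw [hYk_eq k hk ω]
      rw [heq]
      exact hzero
    set rem : Ω → ℝ := fun ω => F (Y (k + 1) ω) - F (Y k ω) -
      deriv F (Y k ω) * (Xh (k + 1) ω - (Xh k ω + α k * Z k ω)) with hremdef
    have hIrem : Integrable rem P :=
      ((hIF (k + 1) (by omega)).sub (hIF k (le_of_lt hk))).sub (hIG k hk)
    have hremint : ∫ ω, rem ω ∂P =
        (∫ ω, F (Y (k + 1) ω) ∂P) - ∫ ω, F (Y k ω) ∂P := by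
      have h1 : Integrable (fun ω => F (Y (k + 1) ω) - F (Y k ω)) P :=
        (hIF (k + 1) (by omega)).sub (hIF k (le_of_lt hk))
      have e1 : ∫ ω, ((F (Y (k + 1) ω) - F (Y k ω)) -
          deriv F (Y k ω) * (Xh (k + 1) ω - (Xh k ω + α k * Z k ω))) ∂P =
          (∫ ω, (F (Y (k + 1) ω) - F (Y k ω)) ∂P) -
          ∫ ω, deriv F (Y k ω) * (Xh (k + 1) ω - (Xh k ω + α k * Z k ω)) ∂P :=
        integral_sub h1 (hIG k hk)
      have e2 : ∫ ω, (F (Y (k + 1) ω) - F (Y k ω)) ∂P =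
          (∫ ω, F (Y (k + 1) ω) ∂P) - ∫ ω, F (Y k ω) ∂P :=
        integral_sub (hIF (k + 1) (by omega)) (hIF k (le_of_lt hk))
      rw [hremdef]
      rw [e1, e2, hzero']
      ring
    have hrembound : ∀ ω, |rem ω| ≤
        (L : ℝ) * |(Xh k ω + α k * Z k ω) - Xh (k + 1) ω| ^ 2 := by
      intro ω
      have hdiff : Y (k + 1) ω - Y k ω = Xh (k + 1) ω - (Xh k ω + α k * Z k ω) :=
        hYsucc k hk ω
      have := taylor_bound hF hFlip (Y k ω) (Y (k + 1) ω)
      rw [hdiff] at this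
      have habs : |Xh (k + 1) ω - (Xh k ω + α k * Z k ω)| =
          |(Xh k ω + α k * Z k ω) - Xh (k + 1) ω| := abs_sub_comm _ _
      rw [habs] at this
      simpa [hremdef] using this
    calc |(∫ ω, F (Y k ω) ∂P) - ∫ ω, F (Y (k + 1) ω) ∂P|
        = |∫ ω, rem ω ∂P| := by rw [hremint, abs_sub_comm]
      _ ≤ ∫ ω, |rem ω| ∂P := by
          simpa [Real.norm_eq_abs] using norm_integral_le_integral_norm (μ := P) rem
      _ ≤ ∫ ω, (L : ℝ) * |(Xh k ω + α k * Z k ω) - Xh (k + 1) ω| ^ 2 ∂P := by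
          apply integral_mono hIrem.abs ((hIsq k hk).const_mul _)
          exact hrembound
      _ = (L : ℝ) * ∫ ω, |(Xh k ω + α k * Z k ω) - Xh (k + 1) ω| ^ 2 ∂P :=
          integral_const_mul _ _
  -- telescoping
  have htel : (∫ ω, F (Y 0 ω) ∂P) - ∫ ω, F (Y n ω) ∂P =
      ∑ k ∈ Finset.range n, ((∫ ω, F (Y k ω) ∂P) - ∫ ω, F (Y (k + 1) ω) ∂P) :=
    (Finset.sum_range_sub' (fun k => ∫ ω, F (Y k ω) ∂P) n).symm
  have hY0 : ∀ ω, Y 0 ω = ∑ i ∈ Finset.range n, α i * Z i ω := by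
    intro ω
    simp only [hYdef, hXhdef]
    rw [Finset.range_eq_Ico]
    simp [XhatScheme]
  have hYn : ∀ ω, Y n ω = Xh n ω := by
    intro ω
    simp only [hYdef]
    simp
  have hgoal1 : (∫ ω, F (∑ i ∈ Finset.range n, α i * Z i ω) ∂P) = ∫ ω, F (Y 0 ω) ∂P := by
    have heq : (fun ω => F (∑ i ∈ Finset.range n, α i * Z i ω)) = fun ω => F (Y 0 ω) := by
      funext ω
      rw [hY0 ω]
    rw [heq]
  have hgoal2 : (∫ ω, F (XhatScheme Nk x α Z Λ n ω) ∂P) = ∫ ω, F (Y n ω) ∂P := by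
    have heq : (fun ω => F (XhatScheme Nk x α Z Λ n ω)) = fun ω => F (Y n ω) := by
      funext ω
      rw [hYn ω]
    rw [heq]
  rw [hgoal1, hgoal2, htel]
  calc |∑ k ∈ Finset.range n, ((∫ ω, F (Y k ω) ∂P) - ∫ ω, F (Y (k + 1) ω) ∂P)|
      ≤ ∑ k ∈ Finset.range n, |(∫ ω, F (Y k ω) ∂P) - ∫ ω, F (Y (k + 1) ω) ∂P| :=
        Finset.abs_sum_le_sum_abs _ _
    _ ≤ ∑ k ∈ Finset.range n,
        (L : ℝ) * ∫ ω, |(Xh k ω + α k * Z k ω) - Xh (k + 1) ω| ^ 2 ∂P :=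
        Finset.sum_le_sum fun k hk => hstep k (Finset.mem_range.mp hk)
    _ = (L : ℝ) * ∑ k ∈ Finset.range n,
        ∫ ω, |(Xh k ω + α k * Z k ω) - Xh (k + 1) ω| ^ 2 ∂P := by
        rw [Finset.mul_sum]
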